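/- In ℂ⁸ with coordinates (z₁,z₂,z₃,z₄,z₅,z₆,z₈,z₉), the common zero set of the fifteen polynomials z₈z₉, z₆z₉, z₅z₉, z₂z₉, z₁z₉, z₆z₈, z₅z₈, z₃z₈, z₁z₈, z₅z₆, z₄z₆, z₂z₆, z₄z₅, z₃z₅, z₂z₃−z₁z₄ is exactly the union of the following five sets: the linear subspace {z₁=z₂=z₅=z₆=z₈=0}, the linear subspace {z₁=z₃=z₅=z₆=z₉=0}, the linear subspace {z₃=z₄=z₆=z₈=z₉=0}, the linear subspace {z₂=z₄=z₅=z₈=z₉=0}, and the quadric cone {z₅=z₆=z₈=z₉=0, z₂z₃=z₁z₄}. -/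
import Mathlib


set_option maxHeartbeats 1000000

/-- In ℂ⁸ with coordinates (z₁,z₂,z₃,z₄,z₅,z₆,z₈,z₉) — here `p 0,…,p 7`
respectively — the common zero set of the fifteen polynomials
z₈z₉, z₆z₉, z₅z₉, z₂z₉, z₁z₉, z₆z₈, z₅z₈, z₃z₈, z₁z₈, z₅z₆, z₄z₆, z₂z₆,
z₄z₅, z₃z₅, z₂z₃−z₁z₄ is exactly the union of four linear subspaces
(the planes π₁, π₂, π₁′, π₂′) and a quadric cone (the cone over Q). -/
theorem tangent_cone_of_WKLM9_at_P5 :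
    {p : Fin 8 → ℂ |
        p 6 * p 7 = 0 ∧ p 5 * p 7 = 0 ∧ p 4 * p 7 = 0 ∧ p 1 * p 7 = 0 ∧
        p 0 * p 7 = 0 ∧ p 5 * p 6 = 0 ∧ p 4 * p 6 = 0 ∧ p 2 * p 6 = 0 ∧
        p 0 * p 6 = 0 ∧ p 4 * p 5 = 0 ∧ p 3 * p 5 = 0 ∧ p 1 * p 5 = 0 ∧
        p 3 * p 4 = 0 ∧ p 2 * p 4 = 0 ∧ p 1 * p 2 - p 0 * p 3 = 0} =
      {p : Fin 8 → ℂ | p 0 = 0 ∧ p 1 = 0 ∧ p 4 = 0 ∧ p 5 = 0 ∧ p 6 = 0} ∪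
      {p : Fin 8 → ℂ | p 0 = 0 ∧ p 2 = 0 ∧ p 4 = 0 ∧ p 5 = 0 ∧ p 7 = 0} ∪
      {p : Fin 8 → ℂ | p 2 = 0 ∧ p 3 = 0 ∧ p 5 = 0 ∧ p 6 = 0 ∧ p 7 = 0} ∪
      {p : Fin 8 → ℂ | p 1 = 0 ∧ p 3 = 0 ∧ p 4 = 0 ∧ p 6 = 0 ∧ p 7 = 0} ∪
      {p : Fin 8 → ℂ | p 4 = 0 ∧ p 5 = 0 ∧ p 6 = 0 ∧ p 7 = 0 ∧
        p 1 * p 2 = p 0 * p 3} := by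
  ext p
  simp only [Set.mem_setOf_eq, Set.mem_union]
  constructor
  · rintro ⟨h1, h2, h3, h4, h5, h6, h7, h8, h9, h10, h11, h12, h13, h14, h15⟩
    rw [sub_eq_zero] at h15
    by_cases k7 : p 7 = 0
    · by_cases k6 : p 6 = 0
      · by_cases k5 : p 5 = 0
        · by_cases k4 : p 4 = 0
          · exact Or.inr ⟨k4, k5, k6, k7, h15⟩
          · refine Or.inl (Or.inl (Or.inr ⟨?_, ?_, k5, k6, k7⟩))
            · exact (mul_eq_zero.1 h14).resolve_right k4
            · exact (mul_eq_zero.1 h13).resolve_right k4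
        · refine Or.inl (Or.inr ⟨?_, ?_, ?_, k6, k7⟩)
          · exact (mul_eq_zero.1 h12).resolve_right k5
          · exact (mul_eq_zero.1 h11).resolve_right k5
          · exact (mul_eq_zero.1 h10).resolve_right k5
      · refine Or.inl (Or.inl (Or.inl (Or.inr ⟨?_, ?_, ?_, ?_, k7⟩)))
        · exact (mul_eq_zero.1 h9).resolve_right k6
        · exact (mul_eq_zero.1 h8).resolve_right k6
        · exact (mul_eq_zero.1 h7).resolve_right k6
        · exact (mul_eq_zero.1 h6).resolve_right k6
    · refine Or.inl (Or.inl (Or.inl (Or.inl ⟨?_, ?_, ?_, ?_, ?_⟩)))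
      · exact (mul_eq_zero.1 h5).resolve_right k7
      · exact (mul_eq_zero.1 h4).resolve_right k7
      · exact (mul_eq_zero.1 h3).resolve_right k7
      · exact (mul_eq_zero.1 h2).resolve_right k7
      · exact (mul_eq_zero.1 h1).resolve_right k7
  · rintro ((((⟨a, b, c, d, e⟩ | ⟨a, b, c, d, e⟩) | ⟨a, b, c, d, e⟩) |
      ⟨a, b, c, d, e⟩) | ⟨a, b, c, d, e⟩) <;>
      refine ⟨?_, ?_, ?_, ?_, ?_, ?_, ?_, ?_, ?_, ?_, ?_, ?_, ?_, ?_, ?_⟩ <;>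
      simp_all
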